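/- Let Y be a real-valued random variable with density f with respect to Lebesgue measure μ, and let t > 0. Set h* = {y : f(y) > t}. Then μ(h*) ≤ 1/t, and for every Lebesgue-measurable set h ⊆ ℝ with μ(h) < ∞, μ(h) + t^{-1} P(Y ∉ h) ≥ μ(h*) + t^{-1} P(Y ∉ h*); that is, the superlevel set of the density at threshold t minimizes the expected step function loss over measurable sets of finite measure. -/

import Mathlib

open MeasureTheory

/-- if `Y` has density `f` with respect to Lebesgue measure and `t > 0`,
then the superlevel set `h* = {y : f(y) > t}` has Lebesgue measure at most `1/t`, and it
minimizes the expected step-function loss `μ(h) + t⁻¹ P(Y ∉ h)` over all measurable sets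
`h` of finite Lebesgue measure. -/
theorem stmt_7 {Ω : Type*} [MeasurableSpace Ω] (P : Measure Ω) [IsProbabilityMeasure P]
    (Y : Ω → ℝ) (hYm : Measurable Y)
    (f : ℝ → ℝ) (hfm : Measurable f) (hf0 : ∀ y, 0 ≤ f y)
    (hdens : Measure.map Y P = volume.withDensity (fun y => ENNReal.ofReal (f y)))
    (t : ℝ) (ht : 0 < t) :
    volume {y : ℝ | t < f y} ≤ ENNReal.ofReal (1 / t) ∧
    ∀ h : Set ℝ, MeasurableSet h → volume h < ⊤ →
      (volume {y : ℝ | t < f y}).toReal + t⁻¹ * (P {ω | Y ω ∉ {y : ℝ | t < f y}}).toReal ≤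
        (volume h).toReal + t⁻¹ * (P {ω | Y ω ∉ h}).toReal := by
  set hs : Set ℝ := {y : ℝ | t < f y} with hhs
  have hms : MeasurableSet hs := measurableSet_lt measurable_const hfm
  -- total mass 1
  have htot : ∫⁻ y, ENNReal.ofReal (f y) = 1 := by
    have h1 := congrArg (fun m : Measure ℝ => m Set.univ) hdens
    simp only [Measure.map_apply hYm MeasurableSet.univ, Set.preimage_univ,
      withDensity_apply _ MeasurableSet.univ, Measure.restrict_univ] at h1
    rw [← h1, measure_univ]
  -- part 1
  have hmul : ENNReal.ofReal t * volume hs ≤ 1 := by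
    calc ENNReal.ofReal t * volume hs
        = ∫⁻ _ in hs, ENNReal.ofReal t := by rw [setLIntegral_const, mul_comm]
      _ ≤ ∫⁻ y in hs, ENNReal.ofReal (f y) :=
          setLIntegral_mono hfm.ennreal_ofReal (fun y hy => ENNReal.ofReal_le_ofReal hy.le)
      _ ≤ ∫⁻ y, ENNReal.ofReal (f y) := setLIntegral_le_lintegral _ _
      _ = 1 := htot
  have hvol : volume hs ≤ ENNReal.ofReal (1 / t) := by
    rw [one_div, ENNReal.ofReal_inv_of_pos ht]
    exact ENNReal.le_inv_iff_mul_le.2 (by rwa [mul_comm] at hmul)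
  refine ⟨hvol, ?_⟩
  have hsfin : volume hs < ⊤ := lt_of_le_of_lt hvol ENNReal.ofReal_lt_top
  -- f is integrable
  have hfint : Integrable f := by
    refine ⟨hfm.aestronglyMeasurable, ?_⟩
    rw [hasFiniteIntegral_iff_norm]
    have : ∀ y, ENNReal.ofReal ‖f y‖ = ENNReal.ofReal (f y) := fun y => by
      rw [Real.norm_of_nonneg (hf0 y)]
    simp only [this, htot]
    exact ENNReal.one_lt_top
  -- probability of landing in a set
  have hPIn : ∀ s : Set ℝ, MeasurableSet s →
      P (Y ⁻¹' s) = ∫⁻ y in s, ENNReal.ofReal (f y) := by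
    intro s hsm
    rw [← Measure.map_apply hYm hsm, hdens, withDensity_apply _ hsm]
  have hIle : ∀ s : Set ℝ, MeasurableSet s →
      (∫⁻ y in s, ENNReal.ofReal (f y)) ≤ 1 := fun s hsm =>
    le_trans (setLIntegral_le_lintegral _ _) htot.le
  have hIeq : ∀ s : Set ℝ, MeasurableSet s →
      (∫⁻ y in s, ENNReal.ofReal (f y)).toReal = ∫ y in s, f y := by
    intro s hsm
    rw [integral_eq_lintegral_of_nonneg_ae (Filter.Eventually.of_forall fun y => hf0 y)
      hfm.aestronglyMeasurable.restrict]
  have hPnot : ∀ s : Set ℝ, MeasurableSet s →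
      (P {ω | Y ω ∉ s}).toReal = 1 - ∫ y in s, f y := by
    intro s hsm
    have : {ω | Y ω ∉ s} = (Y ⁻¹' s)ᶜ := rfl
    rw [this, measure_compl (hYm hsm) (measure_ne_top _ _), measure_univ,
      ENNReal.toReal_sub_of_le (by rw [hPIn s hsm]; exact hIle s hsm) ENNReal.one_ne_top,
      ENNReal.toReal_one, hPIn s hsm, hIeq s hsm]
  intro h hhm hhfin
  rw [hPnot hs hms, hPnot h hhm]
  -- reduce to set integrals of g = 1 - t⁻¹ f
  set g : ℝ → ℝ := fun y => 1 - t⁻¹ * f y with hg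
  have hgint : ∀ s : Set ℝ, MeasurableSet s → volume s < ⊤ → IntegrableOn g s := by
    intro s hsm hsf
    exact ((integrableOn_const hsf.ne).sub ((hfint.const_mul t⁻¹).integrableOn))
  have hgeq : ∀ s : Set ℝ, MeasurableSet s → volume s < ⊤ →
      ∫ y in s, g y = (volume s).toReal - t⁻¹ * ∫ y in s, f y := by
    intro s hsm hsf
    rw [integral_sub (integrableOn_const (C := (1:ℝ)) hsf.ne) (hfint.const_mul t⁻¹).integrableOn,
      setIntegral_const, integral_const_mul, smul_eq_mul, mul_one, measureReal_def]
  have key : ∫ y in hs, g y ≤ ∫ y in h, g y := by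
    have h1 : hs = (hs ∩ h) ∪ (hs \ h) := (Set.inter_union_diff hs h).symm
    have h2 : h = (hs ∩ h) ∪ (h \ hs) := by
      rw [Set.inter_comm]; exact (Set.inter_union_diff h hs).symm
    have hfin1 : volume (hs ∩ h) < ⊤ := lt_of_le_of_lt (measure_mono Set.inter_subset_left) hsfin
    have hfin2 : volume (hs \ h) < ⊤ := lt_of_le_of_lt (measure_mono Set.diff_subset) hsfin
    have hfin3 : volume (h \ hs) < ⊤ := lt_of_le_of_lt (measure_mono Set.diff_subset) hhfin
    have e1 : ∫ y in hs, g y = (∫ y in hs ∩ h, g y) + ∫ y in hs \ h, g y := by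
      rw [← setIntegral_union (Set.disjoint_sdiff_right.mono_left Set.inter_subset_right)
        (hms.diff hhm) (hgint _ (hms.inter hhm) hfin1) (hgint _ (hms.diff hhm) hfin2),
        Set.inter_union_diff]
    have e2 : ∫ y in h, g y = (∫ y in hs ∩ h, g y) + ∫ y in h \ hs, g y := by
      rw [← setIntegral_union (Set.disjoint_sdiff_right.mono_left Set.inter_subset_left)
        (hhm.diff hms) (hgint _ (hms.inter hhm) hfin1) (hgint _ (hhm.diff hms) hfin3),
        Set.inter_comm, Set.inter_union_diff]
    have le1 : ∫ y in hs \ h, g y ≤ 0 := by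
      apply setIntegral_nonpos (hms.diff hhm)
      intro y hy
      have : t < f y := hy.1
      have : 1 < t⁻¹ * f y := by
        rw [← div_eq_inv_mul, lt_div_iff₀ ht, one_mul]; exact this
      simp only [hg]; linarith
    have le2 : 0 ≤ ∫ y in h \ hs, g y := by
      apply setIntegral_nonneg (hhm.diff hms)
      intro y hy
      have : f y ≤ t := not_lt.1 hy.2
      have : t⁻¹ * f y ≤ 1 := by
        rw [← div_eq_inv_mul, div_le_iff₀ ht, one_mul]; exact this
      simp only [hg]; linarith
    rw [e1, e2]; linarith
  rw [hgeq hs hms hsfin, hgeq h hhm hhfin] at key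
  have htinv : 0 ≤ t⁻¹ := (inv_pos.2 ht).le
  nlinarith [key]
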